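/- For the Ising model at zero field on a finite graph G = (V,E), the partition function admits the random current expansion: Z(G,β,0) = 2^{|V|} Σ_{n : ∂n = ∅} w_β(n), where the sum is over currents n : E → ℕ with empty source set, and w_β(n) = Π_{e∈E} β^{n_e}/(n_e!). -/

import Mathlib

open Finset

set_option maxHeartbeats 1000000
universe u

lemma hasSum_pi_prod (ι : Type u) [Fintype ι] :
    ∀ (f : ι → ℕ → ℝ) (S : ι → ℝ), (∀ i, HasSum (f i) (S i)) →
      (∀ i, Summable fun k => ‖f i k‖) →
      HasSum (fun n : ι → ℕ => ∏ i, f i (n i)) (∏ i, S i) ∧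
        Summable (fun n : ι → ℕ => ‖∏ i, f i (n i)‖) := by
  refine Fintype.induction_empty_option
    (P := fun α _ => ∀ (f : α → ℕ → ℝ) (S : α → ℝ), (∀ i, HasSum (f i) (S i)) →
      (∀ i, Summable fun k => ‖f i k‖) →
      HasSum (fun n : α → ℕ => ∏ i, f i (n i)) (∏ i, S i) ∧
        Summable (fun n : α → ℕ => ‖∏ i, f i (n i)‖))
    ?of_equiv ?h_empty ?h_option ι
  case of_equiv =>
    intro α β _ e ih
    letI : Fintype α := Fintype.ofEquiv β e.symm
    intro f S hS hN
    have ih' := ih (fun i => f (e i)) (fun i => S (e i)) (fun i => hS (e i))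
      (fun i => hN (e i))
    set E : (α → ℕ) ≃ (β → ℕ) := e.arrowCongr (Equiv.refl ℕ) with hE
    have hfun : ((fun n : β → ℕ => ∏ j, f j (n j)) ∘ E)
        = fun m : α → ℕ => ∏ i, f (e i) (m i) := by
      funext m
      simp only [Function.comp, hE, Equiv.arrowCongr_apply, Equiv.coe_refl]
      exact (Equiv.prod_comp e fun j => f j (m (e.symm j))).symm.trans
        (by simp)
    have hval : (∏ i, S (e i)) = ∏ j, S j := Equiv.prod_comp e S
    constructor
    · refine E.hasSum_iff.mp ?_
      rw [hfun]
      exact hval ▸ ih'.1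
    · refine E.summable_iff.mp ?_
      have : ((fun n : β → ℕ => ‖∏ j, f j (n j)‖) ∘ E)
          = fun m : α → ℕ => ‖∏ i, f (e i) (m i)‖ := by
        funext m
        simp only [Function.comp] at hfun ⊢
        rw [← congrFun hfun m]
        rfl
      rw [this]
      exact ih'.2
  case h_empty =>
    intro f S hS hN
    constructor
    · simpa using hasSum_fintype (fun n : PEmpty.{u+1} → ℕ => ∏ i, f i (n i))
    · exact (hasSum_fintype _).summable
  case h_option =>
    intro α _ ih f S hS hN
    obtain ⟨h1, h2⟩ := ih (fun i => f (some i)) (fun i => S (some i))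
      (fun i => hS (some i)) (fun i => hN (some i))
    set g : (α → ℕ) → ℝ := fun m => ∏ i, f (some i) (m i) with hg
    set P : ℝ := ∏ i, S (some i) with hP
    have h1' : HasSum g P := h1
    have h2' : Summable fun n => ‖g n‖ := h2
    have h3 : Summable (fun x : ℕ × (α → ℕ) => f none x.1 * g x.2) :=
      summable_mul_of_summable_norm (hN none) h2'
    have hmul : HasSum (fun x : ℕ × (α → ℕ) => f none x.1 * g x.2) (S none * P) :=
      (hS none).mul h1' h3
    set E : ((_ : Option α) → ℕ) ≃ ℕ × (α → ℕ) :=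
      (Equiv.piOptionEquivProd (β := fun _ => ℕ)) with hE
    have hfun : ((fun x : ℕ × (α → ℕ) => f none x.1 * g x.2) ∘ E)
        = fun h : Option α → ℕ => ∏ j, f j (h j) := by
      funext h
      simp only [Function.comp, hE, Equiv.piOptionEquivProd_apply, hg]
      rw [Fintype.prod_option]
    have hval : S none * P = ∏ j, S j := by
      rw [hP, Fintype.prod_option]
    constructor
    · have := E.hasSum_iff.mpr hmul
      rw [hfun, hval] at this
      exact this
    · have hn : Summable (fun x : ℕ × (α → ℕ) => ‖f none x.1 * g x.2‖) :=
        Summable.mul_norm (hN none) h2'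
      have := E.summable_iff.mpr hn
      have heq : ((fun x : ℕ × (α → ℕ) => ‖f none x.1 * g x.2‖) ∘ E)
          = fun h : Option α → ℕ => ‖∏ j, f j (h j)‖ := by
        funext h
        simp only [Function.comp]
        rw [← congrFun hfun h]
        rfl
      rwa [heq] at this

set_option maxHeartbeats 400000


/-- The spin value attached to a Boolean: `+1` or `-1`. -/
noncomputable def spin (b : Bool) : ℝ := if b then 1 else -1

/-- Interaction energy `Σ_{{x,y}∈E} σ_x σ_y` of a spin configuration. -/
noncomputable def interaction {V : Type*} [Fintype V] [DecidableEq V]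
    (G : SimpleGraph V) [DecidableRel G.Adj] (σ : V → Bool) : ℝ :=
  ∑ e ∈ G.edgeFinset,
    Sym2.lift ⟨fun x y => spin (σ x) * spin (σ y), fun _ _ => by ring⟩ e

/-- The weight `w_β(n) = Π_{e∈E} β^{n_e}/n_e!` of a current `n : E → ℕ`. -/
noncomputable def currentWeight {V : Type*} [Fintype V] [DecidableEq V]
    (G : SimpleGraph V) [DecidableRel G.Adj] (β : ℝ)
    (n : ↥G.edgeFinset → ℕ) : ℝ :=
  ∏ e : ↥G.edgeFinset, β ^ (n e) / (Nat.factorial (n e) : ℝ)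

/-- The source set `∂n` of a current: the vertices whose total incident current
`Δ_x(n) = Σ_{y : {x,y}∈E} n_{{x,y}}` is odd. -/
def sources {V : Type*} [Fintype V] [DecidableEq V]
    (G : SimpleGraph V) [DecidableRel G.Adj] (n : ↥G.edgeFinset → ℕ) : Finset V :=
  Finset.univ.filter fun x =>
    ¬ Even (∑ e : ↥G.edgeFinset, if x ∈ (e : Sym2 V) then n e else 0)

lemma spin_edge_pow {V : Type*} [Fintype V] [DecidableEq V] (σ : V → Bool)
    (s : Sym2 V) (hs : ¬ s.IsDiag) (k : ℕ) :
    (Sym2.lift ⟨fun x y => spin (σ x) * spin (σ y), fun _ _ => by ring⟩ s) ^ k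
      = ∏ x : V, spin (σ x) ^ (if x ∈ s then k else 0) := by
  induction s using Sym2.ind with
  | _ a b =>
    have hab : a ≠ b := by simpa [Sym2.mk_isDiag_iff] using hs
    have hterm : ∀ x : V, spin (σ x) ^ (if x ∈ s(a, b) then k else 0)
        = if x ∈ ({a, b} : Finset V) then spin (σ x) ^ k else 1 := by
      intro x
      simp only [Sym2.mem_iff, Finset.mem_insert, Finset.mem_singleton]
      split_ifs with h
      · rfl
      · exact pow_zero _
    rw [Finset.prod_congr rfl (fun x _ => hterm x), Finset.prod_ite_mem,
      Finset.univ_inter, Finset.prod_pair hab, Sym2.lift_mk, mul_pow]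

lemma sum_bool_spin_pow (d : ℕ) :
    (∑ b : Bool, spin b ^ d) = if Even d then (2 : ℝ) else 0 := by
  have h0 : (∑ b : Bool, spin b ^ d) = 1 ^ d + (-1 : ℝ) ^ d := by
    rw [Fintype.sum_bool]; simp [spin]
  rw [h0, one_pow]
  by_cases h : Even d
  · rw [h.neg_one_pow, if_pos h]; norm_num
  · rw [(Nat.not_even_iff_odd.mp h).neg_one_pow, if_neg h]; ring

set_option maxHeartbeats 1000000 in
/-- **Random current expansion of the partition function**: for the Ising model at
zero field on a finite graph `G = (V,E)`,
`Z(G,β,0) = 2^{|V|} Σ_{n : ∂n = ∅} w_β(n)`. -/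
theorem partition_function_random_current {V : Type*} [Fintype V] [DecidableEq V]
    (G : SimpleGraph V) [DecidableRel G.Adj] (β : ℝ) :
    ∑ σ : V → Bool, Real.exp (β * interaction G σ) =
      2 ^ (Fintype.card V) *
        ∑' n : ↥G.edgeFinset → ℕ,
          if sources G n = ∅ then currentWeight G β n else 0 := by
  classical
  set L : (V → Bool) → ↥G.edgeFinset → ℝ := fun σ e =>
    Sym2.lift ⟨fun x y => spin (σ x) * spin (σ y), fun _ _ => by ring⟩ (e : Sym2 V) with hL
  have key : ∀ σ : V → Bool,
      HasSum (fun n : ↥G.edgeFinset → ℕ =>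
          ∏ e, (β * L σ e) ^ (n e) / (Nat.factorial (n e) : ℝ))
        (Real.exp (β * interaction G σ)) := by
    intro σ
    have h := (hasSum_pi_prod ↥G.edgeFinset
        (fun e k => (β * L σ e) ^ k / (Nat.factorial k : ℝ))
        (fun e => Real.exp (β * L σ e))
        (fun e => by
          rw [Real.exp_eq_exp_ℝ]
          exact NormedSpace.expSeries_div_hasSum_exp (β * L σ e))
        (fun e => NormedSpace.norm_expSeries_div_summable (β * L σ e))).1
    have hval : (∏ e : ↥G.edgeFinset, Real.exp (β * L σ e))
        = Real.exp (β * interaction G σ) := by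
      rw [← Real.exp_sum]
      congr 1
      rw [interaction, Finset.mul_sum]
      exact Finset.sum_coe_sort (s := G.edgeFinset)
        (f := fun z => β * Sym2.lift ⟨fun x y => spin (σ x) * spin (σ y), fun _ _ => by ring⟩ z)
    rwa [hval] at h
  have hpoint : ∀ n : ↥G.edgeFinset → ℕ,
      (∑ σ : V → Bool, ∏ e, (β * L σ e) ^ (n e) / (Nat.factorial (n e) : ℝ))
        = 2 ^ (Fintype.card V) * (if sources G n = ∅ then currentWeight G β n else 0) := by
    intro n
    have h1 : ∀ σ : V → Bool,
        (∏ e, (β * L σ e) ^ (n e) / (Nat.factorial (n e) : ℝ))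
          = currentWeight G β n * ∏ x : V, spin (σ x) ^
              (∑ e : ↥G.edgeFinset, if x ∈ (e : Sym2 V) then n e else 0) := by
      intro σ
      have h2 : ∀ e : ↥G.edgeFinset, (β * L σ e) ^ (n e) / (Nat.factorial (n e) : ℝ)
          = (β ^ (n e) / (Nat.factorial (n e) : ℝ)) * (L σ e) ^ (n e) := by
        intro e; rw [mul_pow]; ring
      rw [Finset.prod_congr rfl (fun e _ => h2 e), Finset.prod_mul_distrib]
      rw [currentWeight]
      congr 1
      have h3 : ∀ e : ↥G.edgeFinset, (L σ e) ^ (n e)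
          = ∏ x : V, spin (σ x) ^ (if x ∈ (e : Sym2 V) then n e else 0) := fun e =>
        spin_edge_pow σ e
          (G.not_isDiag_of_mem_edgeSet (SimpleGraph.mem_edgeFinset.mp e.2)) (n e)
      rw [Finset.prod_congr rfl (fun e _ => h3 e), Finset.prod_comm]
      exact Finset.prod_congr rfl fun x _ => Finset.prod_pow_eq_pow_sum _ _ _
    rw [Finset.sum_congr rfl (fun σ _ => h1 σ), ← Finset.mul_sum]
    have h4 : (∏ x : V, ∑ b : Bool, spin b ^
          (∑ e : ↥G.edgeFinset, if x ∈ (e : Sym2 V) then n e else 0))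
        = ∑ σ : V → Bool, ∏ x : V, spin (σ x) ^
            (∑ e : ↥G.edgeFinset, if x ∈ (e : Sym2 V) then n e else 0) := by
      rw [Finset.prod_univ_sum]
      rw [Fintype.piFinset_univ]
    rw [← h4, Finset.prod_congr rfl (fun x _ => sum_bool_spin_pow _)]
    by_cases hsrc : sources G n = ∅
    · have hev : ∀ x : V, Even (∑ e : ↥G.edgeFinset,
          if x ∈ (e : Sym2 V) then n e else 0) := by
        intro x
        by_contra hx
        have hmem : x ∈ sources G n := by
          unfold sources
          exact Finset.mem_filter.mpr ⟨Finset.mem_univ x, hx⟩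
        rw [hsrc] at hmem
        exact absurd hmem (Finset.notMem_empty x)
      rw [Finset.prod_congr rfl (fun x _ => if_pos (hev x)), Finset.prod_const,
        Finset.card_univ, if_pos hsrc]
      ring
    · obtain ⟨x, hx⟩ := Finset.nonempty_iff_ne_empty.mpr hsrc
      have hodd : ¬ Even (∑ e : ↥G.edgeFinset,
          if x ∈ (e : Sym2 V) then n e else 0) := by
        unfold sources at hx
        exact (Finset.mem_filter.mp hx).2
      have hzero : (∏ x : V, if Even (∑ e : ↥G.edgeFinset,
          if x ∈ (e : Sym2 V) then n e else 0) then (2 : ℝ) else 0) = 0 :=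
        Finset.prod_eq_zero (Finset.mem_univ x) (if_neg hodd)
      rw [hzero, if_neg hsrc]
      ring
  calc ∑ σ : V → Bool, Real.exp (β * interaction G σ)
      = ∑ σ : V → Bool, ∑' n : ↥G.edgeFinset → ℕ,
          ∏ e, (β * L σ e) ^ (n e) / (Nat.factorial (n e) : ℝ) :=
        Finset.sum_congr rfl fun σ _ => ((key σ).tsum_eq).symm
    _ = ∑' n : ↥G.edgeFinset → ℕ, ∑ σ : V → Bool,
          ∏ e, (β * L σ e) ^ (n e) / (Nat.factorial (n e) : ℝ) :=
        (Summable.tsum_finsetSum fun σ _ => (key σ).summable).symm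
    _ = ∑' n : ↥G.edgeFinset → ℕ,
          2 ^ (Fintype.card V) * (if sources G n = ∅ then currentWeight G β n else 0) :=
        tsum_congr hpoint
    _ = 2 ^ (Fintype.card V) *
          ∑' n : ↥G.edgeFinset → ℕ,
            if sources G n = ∅ then currentWeight G β n else 0 := tsum_mul_left
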